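/- Let X and Y be closed subspaces of a Hilbert space H, and let P_Y denote orthogonal projection onto Y. Then Y decomposes as the orthogonal direct sum Y = closure(P_Y(X)) ⊕ (Y ∩ X^⊥), i.e. the two summands are orthogonal and their sum is dense in Y (equality when Y is finite dimensional). -/

import Mathlib

open scoped RealInnerProductSpace

/-- For closed subspaces `X`, `Y` of a Hilbert space, `Y` decomposes as the orthogonal direct
sum `Y = closure (P_Y(X)) ⊕ (Y ∩ Xᗮ)`: the two summands are orthogonal and their sum is
dense in `Y`. -/
theorem stmt5 {H : Type*} [NormedAddCommGroup H] [InnerProductSpace ℝ H] [CompleteSpace H]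
    (X Y : Submodule ℝ H) [CompleteSpace X] [CompleteSpace Y] :
    let P : H →ₗ[ℝ] H := (Y.subtypeL.comp Y.orthogonalProjectionOnto).toLinearMap
    let A : Submodule ℝ H := X.map P
    (∀ a ∈ A.topologicalClosure, ∀ b ∈ Y ⊓ Xᗮ, ⟪a, b⟫ = 0) ∧
      (A ⊔ (Y ⊓ Xᗮ)).topologicalClosure = Y := by
  intro P A
  have hPself : ∀ u w : H, ⟪P u, w⟫ = ⟪u, P w⟫ := fun u w =>
    Submodule.inner_starProjection_left_eq_right Y u w
  have hPY : ∀ y ∈ Y, P y = y := by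
    intro y hy
    show Y.starProjection y = y
    rw [Submodule.starProjection_eq_self_iff.mpr hy]
  have hPmem : ∀ v : H, P v ∈ Y := fun v => (Y.orthogonalProjectionOnto v).2
  constructor
  · intro a ha b hb
    have hbA : b ∈ Aᗮ := by
      rw [Submodule.mem_orthogonal]
      rintro u ⟨x, hx, rfl⟩
      rw [hPself x b, hPY b hb.1]
      exact hb.2 x hx
    have haA : a ∈ Aᗮᗮ := by
      rw [Submodule.orthogonal_orthogonal_eq_closure]; exact ha
    have := (Submodule.mem_orthogonal _ _).1 haA b hbA
    rwa [real_inner_comm] at this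
  · have hS : A ⊔ (Y ⊓ Xᗮ) ≤ Y := by
      apply sup_le
      · rintro u ⟨x, hx, rfl⟩
        exact hPmem x
      · exact inf_le_left
    have horth : (A ⊔ (Y ⊓ Xᗮ))ᗮ = Yᗮ := by
      apply le_antisymm
      · intro v hv
        rw [Submodule.mem_orthogonal] at hv
        have hPvX : P v ∈ Xᗮ := by
          rw [Submodule.mem_orthogonal]
          intro x hx
          have h1 : P x ∈ A ⊔ (Y ⊓ Xᗮ) := le_sup_left (α := Submodule ℝ H) ⟨x, hx, rfl⟩
          have h2 := hv (P x) h1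
          rwa [hPself x v] at h2
        have hPvS : P v ∈ A ⊔ (Y ⊓ Xᗮ) :=
          le_sup_right (α := Submodule ℝ H) ⟨hPmem v, hPvX⟩
        have h0 : ⟪P v, v⟫ = 0 := hv (P v) hPvS
        have hPv0 : P v = 0 := by
          have : ⟪P v, P v⟫ = (0 : ℝ) := by
            rw [hPself v (P v), hPY (P v) (hPmem v), real_inner_comm]
            exact h0
          exact inner_self_eq_zero.mp this
        rw [Submodule.mem_orthogonal]
        intro y hy
        calc ⟪y, v⟫ = ⟪P y, v⟫ := by rw [hPY y hy]
          _ = ⟪y, P v⟫ := hPself y v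
          _ = 0 := by rw [hPv0, inner_zero_right]
      · exact Submodule.orthogonal_le hS
    calc (A ⊔ (Y ⊓ Xᗮ)).topologicalClosure = (A ⊔ (Y ⊓ Xᗮ))ᗮᗮ :=
          (Submodule.orthogonal_orthogonal_eq_closure _).symm
      _ = Yᗮᗮ := by rw [horth]
      _ = Y := Submodule.orthogonal_orthogonal Y
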